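/- arXiv:1710.06959 — 3 statements merged into one kernel-verified Lean document; each statement's English description precedes it below -/
import Mathlib

section
/- Let Ψ : ℝ^d → ℝ admit spectral density g and Φ : ℝ^d → ℝ admit spectral density h, with g(ω) ≤ A₁² h(ω) for almost every ω, where A₁ > 0. Then for every n ≥ 1, all points x, x_1, …, x_n ∈ ℝ^d and every u ∈ ℝ^n, u^T K₁ u − 2 u^T r₁(x) + Ψ(0) ≤ A₁² (u^T K u − 2 u^T r(x) + Φ(0)), where K₁ = (Ψ(x_j − x_k))_{jk}, K = (Φ(x_j − x_k))_{jk}, r₁(x) = (Ψ(x − x_1), …, Ψ(x − x_n))^T and r(x) = (Φ(x − x_1), …, Φ(x − x_n))^T. -/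
open MeasureTheory
open scoped RealInnerProductSpace BigOperators

noncomputable section

section aux

variable {d n : ℕ}

lemma cos_inner_mul_integrable (g : EuclideanSpace ℝ (Fin d) → ℝ)
    (hg : Integrable g) (y : EuclideanSpace ℝ (Fin d)) :
    Integrable (fun ω => Real.cos ⟪y, ω⟫ * g ω) := by
  refine hg.bdd_mul (c := 1) ?_ (Filter.Eventually.of_forall fun ω => ?_)
  · exact (Real.continuous_cos.comp (continuous_const.inner continuous_id)).aestronglyMeasurable
  · simpa using Real.abs_cos_le_one _

lemma F_cont (x : EuclideanSpace ℝ (Fin d)) (X : Fin n → EuclideanSpace ℝ (Fin d))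
    (u : Fin n → ℝ) :
    Continuous (fun ω : EuclideanSpace ℝ (Fin d) =>
      (Real.cos ⟪x, ω⟫ - ∑ j, u j * Real.cos ⟪X j, ω⟫) ^ 2 +
      (Real.sin ⟪x, ω⟫ - ∑ j, u j * Real.sin ⟪X j, ω⟫) ^ 2) := by
  apply Continuous.add <;> apply Continuous.pow <;> apply Continuous.sub
  · exact Real.continuous_cos.comp (continuous_const.inner continuous_id)
  · exact continuous_finset_sum _ fun j _ =>
      continuous_const.mul (Real.continuous_cos.comp (continuous_const.inner continuous_id))
  · exact Real.continuous_sin.comp (continuous_const.inner continuous_id)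
  · exact continuous_finset_sum _ fun j _ =>
      continuous_const.mul (Real.continuous_sin.comp (continuous_const.inner continuous_id))

lemma F_bdd (x : EuclideanSpace ℝ (Fin d)) (X : Fin n → EuclideanSpace ℝ (Fin d))
    (u : Fin n → ℝ) (ω : EuclideanSpace ℝ (Fin d)) :
    (Real.cos ⟪x, ω⟫ - ∑ j, u j * Real.cos ⟪X j, ω⟫) ^ 2 +
      (Real.sin ⟪x, ω⟫ - ∑ j, u j * Real.sin ⟪X j, ω⟫) ^ 2
      ≤ 2 * (1 + ∑ j, |u j|) ^ 2 := by
  have habs : ∀ (a : ℝ) (v : Fin n → ℝ), |a| ≤ 1 → (∀ j, |v j| ≤ 1) →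
      (a - ∑ j, u j * v j) ^ 2 ≤ (1 + ∑ j, |u j|) ^ 2 := by
    intro a v ha hv
    have h1 : |a - ∑ j, u j * v j| ≤ 1 + ∑ j, |u j| := by
      calc |a - ∑ j, u j * v j| ≤ |a| + |∑ j, u j * v j| := abs_sub _ _
        _ ≤ 1 + ∑ j, |u j| := by
            gcongr
            calc |∑ j, u j * v j| ≤ ∑ j, |u j * v j| := Finset.abs_sum_le_sum_abs _ _
              _ ≤ ∑ j, |u j| := by
                  refine Finset.sum_le_sum fun j _ => ?_
                  rw [abs_mul]
                  exact mul_le_of_le_one_right (abs_nonneg _) (hv j)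
    calc (a - ∑ j, u j * v j) ^ 2 = |a - ∑ j, u j * v j| ^ 2 := (sq_abs _).symm
      _ ≤ (1 + ∑ j, |u j|) ^ 2 := by
          apply pow_le_pow_left₀ (abs_nonneg _) h1
  have h1 := habs (Real.cos ⟪x, ω⟫) (fun j => Real.cos ⟪X j, ω⟫) (Real.abs_cos_le_one _)
    (fun j => Real.abs_cos_le_one _)
  have h2 := habs (Real.sin ⟪x, ω⟫) (fun j => Real.sin ⟪X j, ω⟫) (Real.abs_sin_le_one _)
    (fun j => Real.abs_sin_le_one _)
  linarith

lemma quad_eq (g : EuclideanSpace ℝ (Fin d) → ℝ) (hg : Integrable g)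
    (x : EuclideanSpace ℝ (Fin d)) (X : Fin n → EuclideanSpace ℝ (Fin d)) (u : Fin n → ℝ) :
    (∑ j, ∑ k, u j * u k * ∫ ω, Real.cos ⟪X j - X k, ω⟫ * g ω)
      - 2 * (∑ j, u j * ∫ ω, Real.cos ⟪x - X j, ω⟫ * g ω)
      + ∫ ω, Real.cos ⟪(0 : EuclideanSpace ℝ (Fin d)), ω⟫ * g ω
    = ∫ ω, ((Real.cos ⟪x, ω⟫ - ∑ j, u j * Real.cos ⟪X j, ω⟫) ^ 2 +
        (Real.sin ⟪x, ω⟫ - ∑ j, u j * Real.sin ⟪X j, ω⟫) ^ 2) * g ω := by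
  have hint : ∀ y : EuclideanSpace ℝ (Fin d), Integrable (fun ω => Real.cos ⟪y, ω⟫ * g ω) :=
    cos_inner_mul_integrable g hg
  set S1 : EuclideanSpace ℝ (Fin d) → ℝ :=
    fun ω => ∑ j, ∑ k, u j * u k * (Real.cos ⟪X j - X k, ω⟫ * g ω) with hS1
  set S2 : EuclideanSpace ℝ (Fin d) → ℝ :=
    fun ω => ∑ j, u j * (Real.cos ⟪x - X j, ω⟫ * g ω) with hS2
  have i1 : Integrable S1 := integrable_finset_sum _ fun j _ =>
    integrable_finset_sum _ fun k _ => ((hint (X j - X k)).const_mul _)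
  have i2 : Integrable S2 := integrable_finset_sum _ fun j _ => ((hint (x - X j)).const_mul _)
  have e1 : (∑ j, ∑ k, u j * u k * ∫ ω, Real.cos ⟪X j - X k, ω⟫ * g ω) = ∫ ω, S1 ω := by
    rw [hS1, integral_finset_sum _ fun j _ =>
      integrable_finset_sum _ fun k _ => ((hint (X j - X k)).const_mul _)]
    refine Finset.sum_congr rfl fun j _ => ?_
    rw [integral_finset_sum _ fun k _ => ((hint (X j - X k)).const_mul _)]
    exact Finset.sum_congr rfl fun k _ => (integral_const_mul _ _).symm
  have e2 : (∑ j, u j * ∫ ω, Real.cos ⟪x - X j, ω⟫ * g ω) = ∫ ω, S2 ω := by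
    rw [hS2, integral_finset_sum _ fun j _ => ((hint (x - X j)).const_mul _)]
    exact Finset.sum_congr rfl fun j _ => (integral_const_mul _ _).symm
  have i12 : Integrable (fun ω => S1 ω - 2 * S2 ω) := i1.sub (i2.const_mul 2)
  rw [e1, e2, show (2 : ℝ) * ∫ ω, S2 ω = ∫ ω, 2 * S2 ω from (integral_const_mul 2 S2).symm,
    ← integral_sub i1 (i2.const_mul 2), ← integral_add i12 (hint 0)]
  refine integral_congr_ae (Filter.Eventually.of_forall fun ω => ?_)
  show S1 ω - 2 * S2 ω + Real.cos ⟪(0 : EuclideanSpace ℝ (Fin d)), ω⟫ * g ω = _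
  rw [hS1, hS2]
  simp only [inner_sub_left, Real.cos_sub, inner_zero_left, Real.cos_zero]
  set c := fun y : EuclideanSpace ℝ (Fin d) => Real.cos ⟪y, ω⟫ with hc
  set s := fun y : EuclideanSpace ℝ (Fin d) => Real.sin ⟪y, ω⟫ with hs
  have sumsq : ∀ v : Fin n → ℝ, (∑ j, v j) ^ 2 = ∑ j, ∑ k, v j * v k := fun v => by
    rw [sq, Finset.sum_mul_sum]
  have key : ∑ j, ∑ k, u j * u k * ((c (X j) * c (X k) + s (X j) * s (X k)) * g ω)
      = ((∑ j, u j * c (X j)) ^ 2 + (∑ j, u j * s (X j)) ^ 2) * g ω := by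
    rw [sumsq (fun j => u j * c (X j)), sumsq (fun j => u j * s (X j)), add_mul,
      Finset.sum_mul, Finset.sum_mul, ← Finset.sum_add_distrib]
    refine Finset.sum_congr rfl fun j _ => ?_
    rw [Finset.sum_mul, Finset.sum_mul, ← Finset.sum_add_distrib]
    exact Finset.sum_congr rfl fun k _ => by ring
  have key2 : ∑ j, u j * ((c x * c (X j) + s x * s (X j)) * g ω)
      = (c x * ∑ j, u j * c (X j) + s x * ∑ j, u j * s (X j)) * g ω := by
    rw [add_mul, Finset.mul_sum, Finset.mul_sum, Finset.sum_mul, Finset.sum_mul,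
      ← Finset.sum_add_distrib]
    exact Finset.sum_congr rfl fun j _ => by ring
  rw [key, key2]
  have pyth : s x ^ 2 + c x ^ 2 = 1 := by rw [hc, hs]; exact Real.sin_sq_add_cos_sq _
  linear_combination (-(g ω)) * pyth

end aux

/-- A kernel `Ψ : ℝ^d → ℝ` admits spectral density `g` if `g` is nonnegative,
Lebesgue integrable, and `Ψ x = ∫ cos ⟪x, ω⟫ g(ω) dω` for all `x`. -/
def HasSpectralDensity {d : ℕ} (Ψ g : EuclideanSpace ℝ (Fin d) → ℝ) : Prop :=
  (∀ ω, 0 ≤ g ω) ∧ Integrable g ∧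
    ∀ x, Ψ x = ∫ ω, Real.cos ⟪x, ω⟫ * g ω

theorem kriging_mse_domination {d : ℕ}
    (Ψ g Φ h : EuclideanSpace ℝ (Fin d) → ℝ)
    (hΨ : HasSpectralDensity Ψ g) (hΦ : HasSpectralDensity Φ h)
    (A₁ : ℝ) (hA₁ : 0 < A₁)
    (hdom : ∀ᵐ ω ∂(volume : Measure (EuclideanSpace ℝ (Fin d))), g ω ≤ A₁ ^ 2 * h ω)
    (n : ℕ) (hn : 1 ≤ n) (x : EuclideanSpace ℝ (Fin d))
    (X : Fin n → EuclideanSpace ℝ (Fin d)) (u : Fin n → ℝ) :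
    (∑ j, ∑ k, u j * u k * Ψ (X j - X k)) - 2 * (∑ j, u j * Ψ (x - X j)) + Ψ 0 ≤
      A₁ ^ 2 * ((∑ j, ∑ k, u j * u k * Φ (X j - X k)) - 2 * (∑ j, u j * Φ (x - X j)) + Φ 0) := by
  obtain ⟨hg0, hg, hΨg⟩ := hΨ
  obtain ⟨hh0, hh, hΦh⟩ := hΦ
  set F := fun ω : EuclideanSpace ℝ (Fin d) =>
    (Real.cos ⟪x, ω⟫ - ∑ j, u j * Real.cos ⟪X j, ω⟫) ^ 2 +
    (Real.sin ⟪x, ω⟫ - ∑ j, u j * Real.sin ⟪X j, ω⟫) ^ 2 with hFdef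
  have hF0 : ∀ ω, 0 ≤ F ω := fun ω => add_nonneg (sq_nonneg _) (sq_nonneg _)
  have hFmul : ∀ (g' : EuclideanSpace ℝ (Fin d) → ℝ), Integrable g' →
      Integrable (fun ω => F ω * g' ω) := fun g' hg' =>
    hg'.bdd_mul (F_cont x X u).aestronglyMeasurable
      (c := 2 * (1 + ∑ j, |u j|) ^ 2) (Filter.Eventually.of_forall fun ω => by
        rw [Real.norm_eq_abs, abs_of_nonneg (hF0 ω)]; exact F_bdd x X u ω)
  have eΨ : (∑ j, ∑ k, u j * u k * Ψ (X j - X k)) - 2 * (∑ j, u j * Ψ (x - X j)) + Ψ 0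
      = ∫ ω, F ω * g ω := by
    simp only [hΨg]; exact quad_eq g hg x X u
  have eΦ : (∑ j, ∑ k, u j * u k * Φ (X j - X k)) - 2 * (∑ j, u j * Φ (x - X j)) + Φ 0
      = ∫ ω, F ω * h ω := by
    simp only [hΦh]; exact quad_eq h hh x X u
  rw [eΨ, eΦ, ← integral_const_mul]
  refine integral_mono_ae (hFmul g hg) ((hFmul h hh).const_mul _) ?_
  filter_upwards [hdom] with ω hω
  calc F ω * g ω ≤ F ω * (A₁ ^ 2 * h ω) := mul_le_mul_of_nonneg_left hω (hF0 ω)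
    _ = A₁ ^ 2 * (F ω * h ω) := by ring
end
end

section
/- Let Ψ : ℝ^d → ℝ admit spectral density g and Φ : ℝ^d → ℝ admit spectral density h, with g(ω) ≤ A₁² h(ω) for almost every ω, where A₁ > 0. Let x_1, …, x_n ∈ ℝ^d be distinct points such that the matrix K = (Φ(x_j − x_k))_{jk} is positive definite. Then for every x ∈ ℝ^d, 0 ≤ Ψ(0) − 2 r(x)^T K^{-1} r₁(x) + r(x)^T K^{-1} K₁ K^{-1} r(x) ≤ A₁² (Φ(0) − r(x)^T K^{-1} r(x)), where K₁ = (Ψ(x_j − x_k))_{jk}, r₁(x) = (Ψ(x − x_1), …, Ψ(x − x_n))^T and r(x) = (Φ(x − x_1), …, Φ(x − x_n))^T. -/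
open MeasureTheory Matrix
open scoped RealInnerProductSpace BigOperators

noncomputable section

lemma trig_key (n : ℕ) (α : ℝ) (θ : Fin n → ℝ) (c : Fin n → ℝ) :
    (Real.cos α - ∑ j, c j * Real.cos (θ j))^2
      + (Real.sin α - ∑ j, c j * Real.sin (θ j))^2
    = 1 - 2 * ∑ j, c j * Real.cos (α - θ j)
      + ∑ j, ∑ k, c j * c k * Real.cos (θ j - θ k) := by
  simp only [Real.cos_sub]
  have e1 : ∑ j, c j * (Real.cos α * Real.cos (θ j) + Real.sin α * Real.sin (θ j))
      = Real.cos α * ∑ j, c j * Real.cos (θ j)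
        + Real.sin α * ∑ j, c j * Real.sin (θ j) := by
    rw [Finset.mul_sum, Finset.mul_sum, ← Finset.sum_add_distrib]
    exact Finset.sum_congr rfl fun j _ => by ring
  have e2 : ∑ j, ∑ k, c j * c k *
        (Real.cos (θ j) * Real.cos (θ k) + Real.sin (θ j) * Real.sin (θ k))
      = (∑ j, c j * Real.cos (θ j)) * (∑ j, c j * Real.cos (θ j))
        + (∑ j, c j * Real.sin (θ j)) * (∑ j, c j * Real.sin (θ j)) := by
    rw [Finset.sum_mul_sum, Finset.sum_mul_sum, ← Finset.sum_add_distrib]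
    refine Finset.sum_congr rfl fun j _ => ?_
    rw [← Finset.sum_add_distrib]
    exact Finset.sum_congr rfl fun k _ => by ring
  rw [e1, e2]
  linear_combination Real.sin_sq_add_cos_sq α

lemma integrable_cos_mul {d : ℕ} {g : EuclideanSpace ℝ (Fin d) → ℝ}
    (hg : Integrable g) (v : EuclideanSpace ℝ (Fin d)) :
    Integrable (fun ω => Real.cos ⟪v, ω⟫ * g ω) := by
  refine hg.bdd_mul (c := 1) ?_ (Filter.Eventually.of_forall fun ω => ?_)
  · exact (Real.continuous_cos.comp (Continuous.inner continuous_const continuous_id)).aestronglyMeasurable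
  · rw [Real.norm_eq_abs]; exact Real.abs_cos_le_one _

lemma spectral_zero {d : ℕ} {Ψ g : EuclideanSpace ℝ (Fin d) → ℝ}
    (hΨ : HasSpectralDensity Ψ g) : Ψ 0 = ∫ ω, g ω := by
  rw [hΨ.2.2 0]
  simp [inner_zero_left]

-- the expanded quadratic integrand
lemma spectral_quad {d n : ℕ} {Ψ g : EuclideanSpace ℝ (Fin d) → ℝ}
    (hΨ : HasSpectralDensity Ψ g) (x : EuclideanSpace ℝ (Fin d))
    (X : Fin n → EuclideanSpace ℝ (Fin d)) (c : Fin n → ℝ) :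
    ∫ ω, (1 - 2 * ∑ j, c j * Real.cos ⟪x - X j, ω⟫
        + ∑ j, ∑ k, c j * c k * Real.cos ⟪X j - X k, ω⟫) * g ω
    = Ψ 0 - 2 * ∑ j, c j * Ψ (x - X j)
        + ∑ j, ∑ k, c j * c k * Ψ (X j - X k) := by
  have hg := hΨ.2.1
  have hint1 : Integrable (fun ω => ∑ j, c j * Real.cos ⟪x - X j, ω⟫ * g ω) :=
    integrable_finset_sum _ fun j _ => ((integrable_cos_mul hg _).const_mul (c j)).congr
      (by filter_upwards with ω; ring)
  have hint2 : Integrable (fun ω =>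
      ∑ j, ∑ k, c j * c k * Real.cos ⟪X j - X k, ω⟫ * g ω) :=
    integrable_finset_sum _ fun j _ => integrable_finset_sum _ fun k _ =>
      ((integrable_cos_mul hg _).const_mul (c j * c k)).congr
        (by filter_upwards with ω; ring)
  have heq : (fun ω => (1 - 2 * ∑ j, c j * Real.cos ⟪x - X j, ω⟫
        + ∑ j, ∑ k, c j * c k * Real.cos ⟪X j - X k, ω⟫) * g ω)
      = fun ω => (g ω - 2 * ∑ j, c j * Real.cos ⟪x - X j, ω⟫ * g ω)
        + ∑ j, ∑ k, c j * c k * Real.cos ⟪X j - X k, ω⟫ * g ω := by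
    funext ω
    have h1 : (∑ j, c j * Real.cos ⟪x - X j, ω⟫) * g ω
        = ∑ j, c j * Real.cos ⟪x - X j, ω⟫ * g ω := Finset.sum_mul _ _ _
    have h2 : (∑ j, ∑ k, c j * c k * Real.cos ⟪X j - X k, ω⟫) * g ω
        = ∑ j, ∑ k, c j * c k * Real.cos ⟪X j - X k, ω⟫ * g ω := by
      rw [Finset.sum_mul]
      exact Finset.sum_congr rfl fun j _ => Finset.sum_mul _ _ _
    linear_combination (-2 : ℝ) * h1 + h2
  rw [heq]
  have ic1 : ∀ j : Fin n, Integrable (fun ω => c j * Real.cos ⟪x - X j, ω⟫ * g ω) :=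
    fun j => ((integrable_cos_mul hg _).const_mul (c j)).congr
      (by filter_upwards with ω; ring)
  have ic2 : ∀ j k : Fin n,
      Integrable (fun ω => c j * c k * Real.cos ⟪X j - X k, ω⟫ * g ω) :=
    fun j k => ((integrable_cos_mul hg _).const_mul (c j * c k)).congr
      (by filter_upwards with ω; ring)
  have hf : Integrable (fun ω => g ω
      - 2 * ∑ j, c j * Real.cos ⟪x - X j, ω⟫ * g ω) := hg.sub (hint1.const_mul 2)
  rw [integral_add hf hint2,
    integral_sub hg (hint1.const_mul 2), MeasureTheory.integral_const_mul,
    spectral_zero hΨ]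
  congr 1
  · congr 1
    rw [MeasureTheory.integral_finset_sum (f := fun (j : Fin n) ω => c j * Real.cos ⟪x - X j, ω⟫ * g ω) Finset.univ (fun j _ => ic1 j)]
    congr 1
    refine Finset.sum_congr rfl fun j _ => ?_
    rw [hΨ.2.2 (x - X j), ← MeasureTheory.integral_const_mul]
    exact integral_congr_ae (by filter_upwards with ω; ring)
  · rw [MeasureTheory.integral_finset_sum (f := fun (j : Fin n) ω => ∑ k, c j * c k * Real.cos ⟪X j - X k, ω⟫ * g ω) Finset.univ (fun j _ => integrable_finset_sum Finset.univ (fun k _ => ic2 j k))]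
    refine Finset.sum_congr rfl fun j _ => ?_
    rw [MeasureTheory.integral_finset_sum (f := fun (k : Fin n) ω => c j * c k * Real.cos ⟪X j - X k, ω⟫ * g ω) Finset.univ fun k _ => ic2 j k]
    refine Finset.sum_congr rfl fun k _ => ?_
    rw [hΨ.2.2 (X j - X k), ← MeasureTheory.integral_const_mul]
    exact integral_congr_ae (by filter_upwards with ω; ring)

lemma integrable_quad {d n : ℕ} {g : EuclideanSpace ℝ (Fin d) → ℝ}
    (hg : Integrable g) (x : EuclideanSpace ℝ (Fin d))
    (X : Fin n → EuclideanSpace ℝ (Fin d)) (c : Fin n → ℝ) :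
    Integrable (fun ω => (1 - 2 * ∑ j, c j * Real.cos ⟪x - X j, ω⟫
        + ∑ j, ∑ k, c j * c k * Real.cos ⟪X j - X k, ω⟫) * g ω) := by
  have h1 : Integrable (fun ω => ∑ j, c j * Real.cos ⟪x - X j, ω⟫ * g ω) :=
    integrable_finset_sum _ fun j _ => ((integrable_cos_mul hg _).const_mul (c j)).congr
      (by filter_upwards with ω; ring)
  have h2 : Integrable (fun ω =>
      ∑ j, ∑ k, c j * c k * Real.cos ⟪X j - X k, ω⟫ * g ω) :=
    integrable_finset_sum _ fun j _ => integrable_finset_sum _ fun k _ =>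
      ((integrable_cos_mul hg _).const_mul (c j * c k)).congr
        (by filter_upwards with ω; ring)
  refine ((hg.sub (h1.const_mul 2)).add h2).congr ?_
  filter_upwards with ω
  have e1 : (∑ j, c j * Real.cos ⟪x - X j, ω⟫) * g ω
      = ∑ j, c j * Real.cos ⟪x - X j, ω⟫ * g ω := Finset.sum_mul _ _ _
  have e2 : (∑ j, ∑ k, c j * c k * Real.cos ⟪X j - X k, ω⟫) * g ω
      = ∑ j, ∑ k, c j * c k * Real.cos ⟪X j - X k, ω⟫ * g ω := by
    rw [Finset.sum_mul]
    exact Finset.sum_congr rfl fun j _ => Finset.sum_mul _ _ _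
  simp only [Pi.add_apply, Pi.sub_apply]
  linear_combination (2 : ℝ) * e1 - e2

theorem kriging_pointwise_mse_bound {d : ℕ}
    (Ψ g Φ h : EuclideanSpace ℝ (Fin d) → ℝ)
    (hΨ : HasSpectralDensity Ψ g) (hΦ : HasSpectralDensity Φ h)
    (A₁ : ℝ) (hA₁ : 0 < A₁)
    (hdom : ∀ᵐ ω ∂(volume : Measure (EuclideanSpace ℝ (Fin d))), g ω ≤ A₁ ^ 2 * h ω)
    (n : ℕ) (X : Fin n → EuclideanSpace ℝ (Fin d)) (hX : Function.Injective X)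
    (K K₁ : Matrix (Fin n) (Fin n) ℝ)
    (hK : K = Matrix.of fun j k => Φ (X j - X k))
    (hK₁ : K₁ = Matrix.of fun j k => Ψ (X j - X k))
    (hKpd : K.PosDef)
    (x : EuclideanSpace ℝ (Fin d))
    (r r₁ : Fin n → ℝ)
    (hr : r = fun j => Φ (x - X j)) (hr₁ : r₁ = fun j => Ψ (x - X j)) :
    0 ≤ Ψ 0 - 2 * (r ⬝ᵥ K⁻¹ *ᵥ r₁) + r ⬝ᵥ (K⁻¹ * K₁ * K⁻¹) *ᵥ r ∧
    Ψ 0 - 2 * (r ⬝ᵥ K⁻¹ *ᵥ r₁) + r ⬝ᵥ (K⁻¹ * K₁ * K⁻¹) *ᵥ r ≤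
      A₁ ^ 2 * (Φ 0 - r ⬝ᵥ K⁻¹ *ᵥ r) := by
  -- symmetry facts
  have hΦeven : ∀ v, Φ (-v) = Φ v := by
    intro v; rw [hΦ.2.2, hΦ.2.2]
    simp [inner_neg_left]
  have hKsymm : Kᵀ = K := by
    subst hK
    ext j k
    show Φ (X k - X j) = Φ (X j - X k)
    rw [← neg_sub, hΦeven]
  have hKunit : IsUnit K.det := hKpd.det_pos.ne'.isUnit
  have hKinv_symm : K⁻¹ᵀ = K⁻¹ := by rw [Matrix.transpose_nonsing_inv, hKsymm]
  set c : Fin n → ℝ := K⁻¹ *ᵥ r with hc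
  have hd1 : ∀ w : Fin n → ℝ, r ⬝ᵥ K⁻¹ *ᵥ w = c ⬝ᵥ w := by
    intro w
    rw [Matrix.dotProduct_mulVec, ← hKinv_symm, Matrix.vecMul_transpose]
  have hKc : K *ᵥ c = r := by
    rw [hc, Matrix.mulVec_mulVec, Matrix.mul_nonsing_inv _ hKunit, Matrix.one_mulVec]
  have qs : ∀ (M : Matrix (Fin n) (Fin n) ℝ) (v w : Fin n → ℝ),
      v ⬝ᵥ M *ᵥ w = ∑ j, ∑ k, v j * w k * M j k := by
    intro M v w
    simp only [dotProduct, Matrix.mulVec, Finset.mul_sum]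
    exact Finset.sum_congr rfl fun j _ => Finset.sum_congr rfl fun k _ => by ring
  -- the nonnegative integrand
  set E : EuclideanSpace ℝ (Fin d) → ℝ := fun ω =>
    1 - 2 * ∑ j, c j * Real.cos ⟪x - X j, ω⟫
      + ∑ j, ∑ k, c j * c k * Real.cos ⟪X j - X k, ω⟫ with hE
  have hEnonneg : ∀ ω, 0 ≤ E ω := by
    intro ω
    rw [hE]
    simp only [inner_sub_left]
    rw [← trig_key n ⟪x, ω⟫ (fun j => ⟪X j, ω⟫) c]
    positivity
  -- the two integrals
  have IΨ : ∫ ω, E ω * g ω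
      = Ψ 0 - 2 * ∑ j, c j * Ψ (x - X j)
        + ∑ j, ∑ k, c j * c k * Ψ (X j - X k) := spectral_quad hΨ x X c
  have IΦ : ∫ ω, E ω * h ω
      = Φ 0 - 2 * ∑ j, c j * Φ (x - X j)
        + ∑ j, ∑ k, c j * c k * Φ (X j - X k) := spectral_quad hΦ x X c
  have intg : Integrable (fun ω => E ω * g ω) := integrable_quad hΨ.2.1 x X c
  have inth : Integrable (fun ω => E ω * (A₁ ^ 2 * h ω)) :=
    integrable_quad (hΦ.2.1.const_mul (A₁ ^ 2)) x X c
  -- identify LHS with ∫ E g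
  have hLHS : Ψ 0 - 2 * (r ⬝ᵥ K⁻¹ *ᵥ r₁) + r ⬝ᵥ (K⁻¹ * K₁ * K⁻¹) *ᵥ r
      = ∫ ω, E ω * g ω := by
    rw [IΨ]
    congr 2
    · rw [hd1 r₁]
      simp only [dotProduct, hr₁]
    · rw [show (K⁻¹ * K₁ * K⁻¹) *ᵥ r = K⁻¹ *ᵥ (K₁ *ᵥ c) from by
        rw [← Matrix.mulVec_mulVec, ← Matrix.mulVec_mulVec], hd1, qs, hK₁]
      rfl
  have hRHS : Φ 0 - r ⬝ᵥ K⁻¹ *ᵥ r = ∫ ω, E ω * h ω := by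
    rw [IΦ]
    have e1 : ∑ j, c j * Φ (x - X j) = c ⬝ᵥ r := by
      simp only [dotProduct, hr]
    have e2 : ∑ j, ∑ k, c j * c k * Φ (X j - X k) = c ⬝ᵥ K *ᵥ c := by
      rw [qs, hK]; rfl
    have e3 : c ⬝ᵥ r = r ⬝ᵥ K⁻¹ *ᵥ r := (hd1 r).symm
    have e4 : c ⬝ᵥ K *ᵥ c = r ⬝ᵥ K⁻¹ *ᵥ r := by rw [hKc, e3]
    rw [← e1, ← e2] at *
    linarith [e1, e2]
  constructor
  · rw [hLHS]
    exact integral_nonneg fun ω => mul_nonneg (hEnonneg ω) (hΨ.1 ω)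
  · rw [hLHS, hRHS]
    have step1 : ∫ ω, E ω * g ω ≤ ∫ ω, E ω * (A₁ ^ 2 * h ω) := by
      refine integral_mono_ae intg inth ?_
      filter_upwards [hdom] with ω hω
      exact mul_le_mul_of_nonneg_left hω (hEnonneg ω)
    have step2 : ∫ ω, E ω * (A₁ ^ 2 * h ω) = A₁ ^ 2 * ∫ ω, E ω * h ω := by
      rw [← MeasureTheory.integral_const_mul]
      exact integral_congr_ae (by filter_upwards with ω; ring)
    linarith
end
end

section
/- For all real numbers R and b with 0 < R ≤ b, one has ∫_0^R √(log(b / ε)) dε ≤ R √(log(e · b / R)). -/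
open MeasureTheory

lemma entropy_sqrt_div (b x : ℝ) (hb : 0 < b) (hx0 : 0 < x) :
    Real.sqrt (b / x) = Real.sqrt b * x ^ (-(1/2) : ℝ) := by
  rw [Real.sqrt_eq_rpow, Real.sqrt_eq_rpow, Real.div_rpow hb.le hx0.le,
    Real.rpow_neg hx0.le, div_eq_mul_inv]

lemma entropy_aux_integrable (R b : ℝ) (hR : 0 < R) (hRb : R ≤ b) :
    IntegrableOn (fun x => Real.log (b / x)) (Set.Ioc (0 : ℝ) R) := by
  have hb : 0 < b := hR.trans_le hRb
  have hmeas : AEStronglyMeasurable (fun x => Real.log (b / x))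
      (volume.restrict (Set.Ioc (0 : ℝ) R)) :=
    (Real.measurable_log.comp (measurable_const.div measurable_id)).aestronglyMeasurable
  have hdom : IntegrableOn (fun x : ℝ => 2 * Real.sqrt b * x ^ (-(1/2) : ℝ))
      (Set.Ioc (0 : ℝ) R) := by
    have := (intervalIntegral.intervalIntegrable_rpow'
      (a := (0:ℝ)) (b := R) (r := (-(1/2) : ℝ)) (by norm_num)).const_mul (2 * Real.sqrt b)
    rw [intervalIntegrable_iff_integrableOn_Ioc_of_le hR.le] at this
    simpa [mul_assoc] using this
  refine hdom.integrable.mono hmeas ?_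
  filter_upwards [ae_restrict_mem measurableSet_Ioc] with x hx
  have hx0 : 0 < x := hx.1
  have hbr : (1:ℝ) ≤ b / x := (one_le_div hx0).2 (hx.2.trans hRb)
  have hlognn : 0 ≤ Real.log (b / x) := Real.log_nonneg hbr
  rw [Real.norm_of_nonneg hlognn]
  have hsq : Real.log (b / x) ≤ 2 * Real.sqrt (b / x) := by
    have h1 : Real.log (b / x) = 2 * Real.log (Real.sqrt (b / x)) := by
      rw [show (2:ℝ) * Real.log (Real.sqrt (b/x)) = Real.log (Real.sqrt (b/x) ^ 2) by
        rw [Real.log_pow]; push_cast; ring, Real.sq_sqrt (by positivity)]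
    have h2 : Real.log (Real.sqrt (b / x)) ≤ Real.sqrt (b / x) - 1 :=
      Real.log_le_sub_one_of_pos (Real.sqrt_pos.2 (by positivity))
    nlinarith [Real.sqrt_nonneg (b / x)]
  calc Real.log (b / x) ≤ 2 * Real.sqrt (b / x) := hsq
    _ = 2 * Real.sqrt b * x ^ (-(1/2) : ℝ) := by
        rw [entropy_sqrt_div b x hb hx0]; ring
    _ ≤ ‖2 * Real.sqrt b * x ^ (-(1/2) : ℝ)‖ := le_abs_self _

lemma entropy_aux_integral (R b : ℝ) (hR : 0 < R) (hRb : R ≤ b) :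
    (∫ x in Set.Ioc (0 : ℝ) R, Real.log (b / x)) = R * Real.log (Real.exp 1 * b / R) := by
  have hb : 0 < b := hR.trans_le hRb
  set F : ℝ → ℝ := fun x => x * Real.log b - x * Real.log x + x with hF
  have hcont : ContinuousOn F (Set.Icc 0 R) := by
    apply Continuous.continuousOn
    exact ((continuous_id.mul continuous_const).sub Real.continuous_mul_log).add continuous_id
  have hderiv : ∀ x ∈ Set.Ioo (0:ℝ) R, HasDerivWithinAt F (Real.log (b / x)) (Set.Ioi x) x := by
    intro x hx
    have hx0 : x ≠ 0 := ne_of_gt hx.1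
    have h1 : HasDerivAt F (1 * Real.log b - (Real.log x + 1) + 1) x :=
      (((hasDerivAt_id x).mul_const (Real.log b)).sub
        (Real.hasDerivAt_mul_log hx0)).add (hasDerivAt_id x)
    have h2 : 1 * Real.log b - (Real.log x + 1) + 1 = Real.log (b / x) := by
      rw [Real.log_div (ne_of_gt hb) hx0]; ring
    rw [h2] at h1
    exact h1.hasDerivWithinAt
  have hint : IntervalIntegrable (fun x => Real.log (b / x)) volume 0 R := by
    rw [intervalIntegrable_iff_integrableOn_Ioc_of_le hR.le]
    exact entropy_aux_integrable R b hR hRb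
  have key := intervalIntegral.integral_eq_sub_of_hasDeriv_right_of_le hR.le hcont hderiv hint
  rw [intervalIntegral.integral_of_le hR.le] at key
  rw [key]
  have h3 : F R - F 0 = R * (Real.log b - Real.log R + 1) := by
    simp only [hF]; simp; ring
  rw [h3]
  congr 1
  rw [Real.log_div (by positivity) (ne_of_gt hR), Real.log_mul (Real.exp_ne_zero 1) (ne_of_gt hb),
    Real.log_exp]
  ring

/-- The entropy-integral estimate used in Step 3 of the proof of Theorem 1 of
Wang, Tuo and Wu: for `0 < R ≤ b`, `∫_0^R √(log(b/ε)) dε ≤ R √(log(e b / R))`. -/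
theorem entropy_integral_bound (R b : ℝ) (hR : 0 < R) (hRb : R ≤ b) :
    (∫ ε in Set.Ioc (0 : ℝ) R, Real.sqrt (Real.log (b / ε))) ≤
      R * Real.sqrt (Real.log (Real.exp 1 * b / R)) := by
  have hb : 0 < b := hR.trans_le hRb
  set μ := volume.restrict (Set.Ioc (0 : ℝ) R) with hμ
  set f : ℝ → ℝ := fun x => Real.sqrt (Real.log (b / x)) with hf
  set L : ℝ := Real.log (Real.exp 1 * b / R) with hL
  have hLnn : 0 ≤ L := by
    apply Real.log_nonneg
    rw [le_div_iff₀ hR]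
    nlinarith [Real.one_le_exp (by norm_num : (0:ℝ) ≤ 1), hb, hRb]
  have hne : ∀ᵐ x ∂μ, x ∈ Set.Ioc (0:ℝ) R := ae_restrict_mem measurableSet_Ioc
  have hlognn : ∀ᵐ x ∂μ, 0 ≤ Real.log (b / x) := by
    filter_upwards [hne] with x hx
    exact Real.log_nonneg ((one_le_div hx.1).2 (hx.2.trans hRb))
  have hfmeas : AEStronglyMeasurable f μ :=
    (Real.continuous_sqrt.measurable.comp
      (Real.measurable_log.comp (measurable_const.div measurable_id))).aestronglyMeasurable
  have hsqnat : ∀ᵐ x ∂μ, f x ^ (2:ℕ) = Real.log (b / x) := by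
    filter_upwards [hlognn] with x hx
    exact Real.sq_sqrt hx
  have hintlog : Integrable (fun x => Real.log (b / x)) μ :=
    entropy_aux_integrable R b hR hRb
  have hint2 : Integrable (fun x => f x ^ (2:ℕ)) μ :=
    hintlog.congr (hsqnat.mono fun x hx => hx.symm)
  have hmemf : MemLp f (ENNReal.ofReal 2) μ := by
    have : MemLp f 2 μ := (memLp_two_iff_integrable_sq hfmeas).2 hint2
    simpa [ENNReal.ofReal_ofNat] using this
  have hmemg : MemLp (fun _ : ℝ => (1:ℝ)) (ENNReal.ofReal 2) μ := memLp_const 1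
  have hconj : Real.HolderConjugate 2 2 := by constructor <;> norm_num
  have hfnn : 0 ≤ᵐ[μ] f := hne.mono fun x _ => Real.sqrt_nonneg _
  have hgnn : 0 ≤ᵐ[μ] fun _ : ℝ => (1:ℝ) := hne.mono fun x _ => zero_le_one
  have holder := integral_mul_le_Lp_mul_Lq_of_nonneg hconj hfnn hgnn hmemf hmemg
  simp only [mul_one] at holder
  have h1 : (∫ x, f x ^ (2:ℝ) ∂μ) = R * L := by
    have heq : ∀ᵐ x ∂μ, f x ^ (2:ℝ) = Real.log (b / x) := by
      filter_upwards [hsqnat] with x hx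
      rw [show (2:ℝ) = ((2:ℕ):ℝ) by norm_num, Real.rpow_natCast, hx]
    rw [integral_congr_ae heq]
    exact entropy_aux_integral R b hR hRb
  have h2 : (∫ _x, (1:ℝ) ^ (2:ℝ) ∂μ) = R := by
    simp [hμ, Real.volume_Ioc, ENNReal.toReal_ofReal hR.le, hR.le]
  rw [h1, h2] at holder
  refine holder.trans_eq ?_
  rw [← Real.sqrt_eq_rpow, ← Real.sqrt_eq_rpow,
    ← Real.sqrt_mul (by positivity) R, show R * L * R = R^2 * L by ring,
    Real.sqrt_mul (sq_nonneg R), Real.sqrt_sq hR.le]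
end
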